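/- Define F(P) = T − Σ_k E_k/(p_k*(P) + c_k), where each p_k*(P) is the root of w_k·log₂(1+p γ_k) − w_k(p+c_k)γ_k/((1+pγ_k)ln 2) = P·ψ for fixed ψ > 0. Then F is monotonically increasing in P ≥ 0. -/

import Mathlib

lemma phi_strictMono (a : ℝ) (ha : a < 1) :
    StrictMonoOn (fun u => Real.log u + a / u) (Set.Ici 1) := by
  apply strictMonoOn_of_deriv_pos (convex_Ici 1)
  · apply ContinuousOn.add
    · exact Real.continuousOn_log.mono (fun x hx => by
        simp only [Set.mem_compl_iff, Set.mem_singleton_iff]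
        intro h; rw [h] at hx; simp at hx; linarith)
    · exact continuousOn_const.div continuousOn_id (fun x hx => by
        simp at hx ⊢; linarith)
  · intro x hx
    rw [interior_Ici] at hx
    have hx1 : 1 < x := hx
    have hx0 : 0 < x := by linarith
    have hd : HasDerivAt (fun u => Real.log u + a / u)
        (1 / x + (0 * x - a * 1) / x ^ 2) x := by
      have : HasDerivAt (fun u => Real.log u + a / u)
          (x⁻¹ + (0 * x - a * 1) / x ^ 2) x := (Real.hasDerivAt_log hx0.ne').add
        ((hasDerivAt_const x a).div (hasDerivAt_id x) hx0.ne')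
      simpa [one_div] using this
    rw [hd.deriv]
    have heq : 1 / x + (0 * x - a * 1) / x ^ 2 = (x - a) / x ^ 2 := by
      field_simp; ring
    rw [heq]
    exact div_pos (by linarith) (by positivity)

lemma g_eq (w γc c p : ℝ) (hγ : 0 < γc) (hp : 0 ≤ p) :
    w * Real.logb 2 (1 + p * γc) - w * (p + c) * γc / ((1 + p * γc) * Real.log 2)
      = w / Real.log 2 * ((Real.log (1 + p * γc) + (1 - c * γc) / (1 + p * γc)) - 1) := by
  have hu : (0:ℝ) < 1 + p * γc := by nlinarith
  have hl2 : (0:ℝ) < Real.log 2 := Real.log_pos (by norm_num)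
  rw [Real.logb]
  field_simp
  ring

theorem F_increasing_in_P (K : ℕ) (w γ c E : Fin K → ℝ)
    (hw : ∀ k, 0 < w k) (hγ : ∀ k, 0 < γ k) (hc : ∀ k, 0 < c k) (hE : ∀ k, 0 ≤ E k)
    (T ψ : ℝ) (hT : 0 < T) (hψ : 0 < ψ)
    (pstar : Fin K → ℝ → ℝ)
    (hpstar : ∀ k P, 0 ≤ P → 0 ≤ pstar k P ∧
      w k * Real.logb 2 (1 + pstar k P * γ k)
        - w k * (pstar k P + c k) * γ k / ((1 + pstar k P * γ k) * Real.log 2) = P * ψ)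
    (F : ℝ → ℝ) (hF : ∀ P, F P = T - ∑ k, E k / (pstar k P + c k)) :
    MonotoneOn F (Set.Ici (0 : ℝ)) := by
  intro P1 h1 P2 h2 h12
  simp only [Set.mem_Ici] at h1 h2
  have hl2 : (0:ℝ) < Real.log 2 := Real.log_pos (by norm_num)
  have key : ∀ k, pstar k P1 ≤ pstar k P2 := by
    intro k
    obtain ⟨hp1, he1⟩ := hpstar k P1 h1
    obtain ⟨hp2, he2⟩ := hpstar k P2 h2
    by_contra hcon
    push_neg at hcon
    set a := 1 - c k * γ k with ha_def
    have ha : a < 1 := by nlinarith [hc k, hγ k]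
    have hu1 : (1:ℝ) ≤ 1 + pstar k P1 * γ k := by nlinarith [hγ k]
    have hu2 : (1:ℝ) ≤ 1 + pstar k P2 * γ k := by nlinarith [hγ k]
    have hult : 1 + pstar k P2 * γ k < 1 + pstar k P1 * γ k := by
      nlinarith [hγ k]
    rw [g_eq (w k) (γ k) (c k) (pstar k P1) (hγ k) hp1] at he1
    rw [g_eq (w k) (γ k) (c k) (pstar k P2) (hγ k) hp2] at he2
    have hphi := phi_strictMono a ha (Set.mem_Ici.mpr hu2) (Set.mem_Ici.mpr hu1) hult
    simp only at hphi
    have hwl : 0 < w k / Real.log 2 := div_pos (hw k) hl2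
    have hPψ : P1 * ψ ≤ P2 * ψ := by nlinarith
    rw [← he1, ← he2] at hPψ
    have := (mul_le_mul_iff_right₀ hwl).mp hPψ
    linarith
  rw [hF P1, hF P2]
  have hsum : ∑ k, E k / (pstar k P2 + c k) ≤ ∑ k, E k / (pstar k P1 + c k) := by
    apply Finset.sum_le_sum
    intro k _
    have hd1 : 0 < pstar k P1 + c k := by
      have := (hpstar k P1 h1).1; linarith [hc k]
    gcongr
    · exact hE k
    · exact key k
  linarith
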